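/- In the Verma module V(h,c) with distinguished singular vector v, the vectors L_{i_1}·L_{i_2}·…·L_{i_k}·v with k ∈ ℕ and i_1 ≥ i_2 ≥ … ≥ i_k ≥ 1 form a basis of V(h,c) as a complex vector space. Consequently, for every n ∈ ℕ the eigenspace of L_0 in V(h,c) with eigenvalue h + n has dimension p(n), the number of partitions of n. -/

import Mathlib

/-- A representation of the Virasoro algebra on a complex vector space `V`:
a family of operators `L n` (`n : ℤ`) and an operator `C` satisfying the Virasoro
commutation relations
`[L m, L n] = (n - m) L (m+n) + (C/12)(n³ - n) δ_{m+n,0}` and `[C, L n] = 0`. -/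
structure VirasoroRep (V : Type) [AddCommGroup V] [Module ℂ V] where
  L : ℤ → Module.End ℂ V
  C : Module.End ℂ V
  comm_LL : ∀ m n : ℤ, L m * L n - L n * L m =
      ((n : ℂ) - (m : ℂ)) • L (m + n) +
        (if m + n = 0 then (((n : ℂ) ^ 3 - (n : ℂ)) / 12) else 0) • C
  comm_CL : ∀ n : ℤ, C * L n - L n * C = 0

namespace VirasoroRep

variable {V W : Type} [AddCommGroup V] [Module ℂ V] [AddCommGroup W] [Module ℂ W]

/-- `v` is a singular vector of weight `(h, c)`: it is annihilated by all `L (-n)`, `n ≥ 1`,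
and is an eigenvector of `L 0` and `C` with eigenvalues `h` resp. `c`. -/
def IsSingular (ρ : VirasoroRep V) (h c : ℂ) (v : V) : Prop :=
  (∀ n : ℤ, 1 ≤ n → ρ.L (-n) v = 0) ∧ ρ.L 0 v = h • v ∧ ρ.C v = c • v

/-- A linear subspace invariant under the Virasoro action, i.e. an `𝔏`-submodule. -/
def Invariant (ρ : VirasoroRep V) (p : Submodule ℂ V) : Prop :=
  (∀ n : ℤ, ∀ x ∈ p, ρ.L n x ∈ p) ∧ ∀ x ∈ p, ρ.C x ∈ p

/-- The `𝔏`-submodule `U(𝔏)·v` generated by a vector `v`: the smallest invariant subspace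
containing `v`. -/
def gen (ρ : VirasoroRep V) (v : V) : Submodule ℂ V :=
  sInf {p : Submodule ℂ V | ρ.Invariant p ∧ v ∈ p}

/-- The vector `v` generates the module: `U(𝔏)·v` is everything. -/
def Generates (ρ : VirasoroRep V) (v : V) : Prop :=
  ∀ p : Submodule ℂ V, ρ.Invariant p → v ∈ p → p = ⊤

/-- A homomorphism of Virasoro modules: a linear map intertwining the actions. -/
def IsHom (ρ : VirasoroRep V) (σ : VirasoroRep W) (f : V →ₗ[ℂ] W) : Prop :=
  (∀ (n : ℤ) (x : V), f (ρ.L n x) = σ.L n (f x)) ∧ ∀ x : V, f (ρ.C x) = σ.C (f x)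

end VirasoroRep

/-- A bundled module of the Virasoro algebra (a complex vector space together with a
Virasoro representation on it). -/
structure VirasoroModule where
  carrier : Type
  [isAddCommGroup : AddCommGroup carrier]
  [isModule : Module ℂ carrier]
  rep : VirasoroRep carrier

attribute [instance] VirasoroModule.isAddCommGroup VirasoroModule.isModule

/-- `M` together with the singular vector `v` is a Verma module of weight `(h, c)`:
`v` is singular of weight `(h, c)`, generates `M`, and the pair has the universal property
that any singular vector of weight `(h, c)` in any Virasoro module receives a unique
homomorphism from `M` sending `v` to it. -/
def IsVermaModule (h c : ℂ) (M : VirasoroModule) (v : M.carrier) : Prop :=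
  M.rep.IsSingular h c v ∧ M.rep.Generates v ∧
    ∀ (W : VirasoroModule) (w : W.carrier), W.rep.IsSingular h c w →
      ∃! f : M.carrier →ₗ[ℂ] W.carrier, M.rep.IsHom W.rep f ∧ f v = w


namespace VermaAux

noncomputable section

abbrev V := List ℕ →₀ ℂ

def δ (w : List ℕ) : V := Finsupp.single w 1

def Good (l : List ℕ) : Prop := l.IsChain (· ≥ ·) ∧ ∀ j ∈ l, 1 ≤ j

instance : DecidablePred Good := fun l =>
  Classical.dec _

def HdZ (l : List ℕ) : ℤ := (l.headI : ℤ)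

def γ (c : ℂ) (n : ℤ) (i : ℕ) : ℂ :=
  if n + (i : ℤ) = 0 then ((i : ℂ) ^ 3 - (i : ℂ)) / 12 * c else 0

variable (h c : ℂ)

/-- Fuel-based straightening action of `L n` on the basis vector indexed by `l`. -/
def P : ℕ → ℤ → List ℕ → V
  | 0, _, _ => 0
  | _ + 1, n, [] => if n = 0 then h • δ [] else if 1 ≤ n then δ [n.toNat] else 0
  | k + 1, n, i :: t =>
      if 1 ≤ n ∧ (i : ℤ) ≤ n then δ (n.toNat :: i :: t)
      else (P k n t).sum (fun s a => a • P k (i : ℤ) s)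
        + ((i : ℂ) - (n : ℂ)) • P k (n + (i : ℤ)) t + γ c n (i : ℕ) • δ t

lemma P_zero (n : ℤ) (l : List ℕ) : P h c 0 n l = 0 := rfl

lemma P_nil (k : ℕ) (n : ℤ) :
    P h c (k + 1) n [] = if n = 0 then h • δ [] else if 1 ≤ n then δ [n.toNat] else 0 := rfl

lemma P_cons (k : ℕ) (n : ℤ) (i : ℕ) (t : List ℕ) :
    P h c (k + 1) n (i :: t) =
      if 1 ≤ n ∧ (i : ℤ) ≤ n then δ (n.toNat :: i :: t)
      else (P h c k n t).sum (fun s a => a • P h c k (i : ℤ) s)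
        + ((i : ℂ) - (n : ℂ)) • P h c k (n + (i : ℤ)) t + γ c n (i : ℕ) • δ t := rfl

lemma Good_nil : Good [] := ⟨List.isChain_nil, by simp⟩

lemma Good.tail {i : ℕ} {t : List ℕ} (hg : Good (i :: t)) : Good t :=
  ⟨hg.1.tail, fun j hj => hg.2 j (List.mem_cons_of_mem _ hj)⟩

lemma Good.head_pos {i : ℕ} {t : List ℕ} (hg : Good (i :: t)) : 1 ≤ i :=
  hg.2 i (List.mem_cons_self)

lemma Good.hd_le {i : ℕ} {t : List ℕ} (hg : Good (i :: t)) : HdZ t ≤ (i : ℤ) := by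
  cases t with
  | nil => simp [HdZ]
  | cons j t' =>
    have := List.isChain_cons_cons.mp hg.1
    simpa [HdZ] using Int.ofNat_le.mpr this.1

lemma Good.cons {i : ℕ} {t : List ℕ} (hg : Good t) (h1 : 1 ≤ i) (h2 : HdZ t ≤ (i : ℤ)) :
    Good (i :: t) := by
  refine ⟨?_, ?_⟩
  · cases t with
    | nil => simp
    | cons j t' =>
      refine List.isChain_cons_cons.mpr ⟨?_, hg.1⟩
      have : (j : ℤ) ≤ (i : ℤ) := h2
      exact_mod_cast this
  · intro j hj
    rcases List.mem_cons.mp hj with rfl | hj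
    · exact h1
    · exact hg.2 j hj

lemma HdZ_cons (i : ℕ) (t : List ℕ) : HdZ (i :: t) = (i : ℤ) := rfl

lemma not_shortcut {n : ℤ} {i : ℕ} (h1 : 1 ≤ i) (hns : ¬(1 ≤ n ∧ (i : ℤ) ≤ n)) :
    n < (i : ℤ) := by
  by_cases hn : 1 ≤ n
  · push_neg at hns; exact hns hn
  · push_neg at hn; omega

/-- Shortcut evaluation: fuel-independent. -/
lemma P_shortcut {m : ℤ} {s : List ℕ} (h1 : 1 ≤ m) (h2 : HdZ s ≤ m) (k : ℕ) :
    P h c (k + 1) m s = δ (m.toNat :: s) := by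
  cases s with
  | nil =>
    rw [P_nil]
    have : ¬ m = 0 := by omega
    simp [this, h1]
  | cons j s' =>
    rw [P_cons]
    have : (1 ≤ m ∧ (j : ℤ) ≤ m) := ⟨h1, h2⟩
    simp [this]

/-- Support invariant. -/
lemma P_supp : ∀ k : ℕ, ∀ n : ℤ, ∀ l : List ℕ, Good l →
    ∀ s ∈ (P h c k n l).support,
      Good s ∧ s.length ≤ l.length + 1 ∧ (s.length = l.length + 1 → HdZ s ≤ max n (HdZ l)) := by
  intro k
  induction k with
  | zero => intro n l _ s hs; simp [P_zero] at hs
  | succ k ih =>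
    intro n l hg s hs
    cases l with
    | nil =>
      rw [P_nil] at hs
      by_cases hn0 : n = 0
      · simp only [hn0, if_pos rfl] at hs
        have := Finsupp.support_smul hs
        rw [δ] at this
        have := Finsupp.support_single_subset this
        simp at this
        subst this
        refine ⟨Good_nil, by simp, by simp⟩
      · by_cases hn1 : 1 ≤ n
        · simp only [hn0, if_neg hn0, if_pos hn1] at hs
          rw [δ] at hs
          have := Finsupp.support_single_subset hs
          simp at this
          subst this
          have htn : (n.toNat : ℤ) = n := Int.toNat_of_nonneg (by omega)
          refine ⟨⟨by simp, by simpa using (by omega : 1 ≤ n.toNat)⟩, by simp, ?_⟩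
          intro _
          simp only [HdZ, List.headI, htn]
          exact le_trans (le_max_left n 0) (le_refl _)
        · simp [hn0, hn1] at hs
    | cons i t =>
      rw [P_cons] at hs
      have hgt : Good t := hg.tail
      have hi1 : 1 ≤ i := hg.head_pos
      have hht : HdZ t ≤ (i : ℤ) := hg.hd_le
      by_cases hsc : 1 ≤ n ∧ (i : ℤ) ≤ n
      · rw [if_pos hsc] at hs
        rw [δ] at hs
        have := Finsupp.support_single_subset hs
        simp at this
        subst this
        have htn : (n.toNat : ℤ) = n := Int.toNat_of_nonneg (by omega)
        refine ⟨?_, by simp, ?_⟩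
        · exact hg.cons (by omega) (by rw [HdZ_cons]; omega)
        · intro _
          simp only [HdZ_cons, HdZ, List.headI, htn]
          exact le_max_left _ _
      · rw [if_neg hsc] at hs
        have hni : n < (i : ℤ) := not_shortcut hi1 hsc
        rcases Finset.mem_union.mp (Finsupp.support_add hs) with hs1 | hs1
        · rcases Finset.mem_union.mp (Finsupp.support_add hs1) with hs2 | hs2
          · -- from the inner sum: apply ℓ i to components
            have hs3 := Finsupp.support_sum hs2
            rcases Finset.mem_biUnion.mp hs3 with ⟨s', hs', hss⟩
            have hss' : s ∈ (P h c k (i : ℤ) s').support :=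
              Finsupp.support_smul hss
            obtain ⟨G1, L1, H1⟩ := ih n t hgt s' hs'
            obtain ⟨G2, L2, H2⟩ := ih (i : ℤ) s' G1 s hss'
            refine ⟨G2, by simp only [List.length_cons]; omega, ?_⟩
            intro hfull
            simp only [List.length_cons] at hfull
            have hL1' : s'.length = t.length + 1 := by omega
            have hH1 : HdZ s' ≤ max n (HdZ t) := H1 hL1'
            have hH2 : HdZ s ≤ max (i : ℤ) (HdZ s') := H2 (by omega)
            rw [HdZ_cons]
            have : HdZ s' ≤ (i : ℤ) := le_trans hH1 (max_le (le_of_lt hni) hht)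
            exact le_trans hH2 (le_trans (max_le (le_refl _) this) (le_max_right n _))
          · have hss' : s ∈ (P h c k (n + (i : ℤ)) t).support :=
              Finsupp.support_smul hs2
            obtain ⟨G1, L1, _⟩ := ih (n + (i : ℤ)) t hgt s hss'
            refine ⟨G1, ?_, ?_⟩
            · simp only [List.length_cons]; omega
            · intro hh; exfalso; simp only [List.length_cons] at hh; omega
        · have hss' : s ∈ (δ t).support := Finsupp.support_smul hs1
          rw [δ] at hss'
          have := Finsupp.support_single_subset hss'
          simp at this
          subst this
          refine ⟨hgt, ?_, ?_⟩
          · simp only [List.length_cons]; omega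
          · intro hh; exfalso; simp only [List.length_cons] at hh; omega

/-- Fuel stability. -/
lemma P_stab : ∀ k : ℕ, ∀ n : ℤ, ∀ l : List ℕ, Good l → l.length + 1 ≤ k →
    P h c (k + 1) n l = P h c k n l := by
  intro k
  induction k with
  | zero => intro n l _ hlen; omega
  | succ k ih =>
    intro n l hg hlen
    cases l with
    | nil => rw [P_nil, P_nil]
    | cons i t =>
      rw [P_cons, P_cons]
      by_cases hsc : 1 ≤ n ∧ (i : ℤ) ≤ n
      · rw [if_pos hsc, if_pos hsc]
      · rw [if_neg hsc, if_neg hsc]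
        have hgt := hg.tail
        have hi1 := hg.head_pos
        have hht := hg.hd_le
        have hlt : t.length + 1 ≤ k := by simp only [List.length_cons] at hlen; omega
        have e1 : P h c (k + 1) n t = P h c k n t := ih n t hgt hlt
        have e2 : P h c (k + 1) (n + (i : ℤ)) t = P h c k (n + (i : ℤ)) t := ih _ t hgt hlt
        rw [e1, e2]
        congr 1
        congr 1
        apply Finsupp.sum_congr
        intro s hs
        obtain ⟨G1, L1, H1⟩ := P_supp h c k n t hgt s hs
        by_cases hsl : s.length ≤ t.length
        · rw [ih (i : ℤ) s G1 (by omega)]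
        · have hfull : s.length = t.length + 1 := by omega
          have hH : HdZ s ≤ (i : ℤ) :=
            le_trans (H1 hfull) (max_le (le_of_lt (not_shortcut hi1 hsc)) hht)
          have hi1' : (1 : ℤ) ≤ (i : ℤ) := by exact_mod_cast hi1
          cases k with
          | zero => omega
          | succ k' =>
            rw [P_shortcut h c hi1' hH k', P_shortcut h c hi1' hH (k' + 1)]

def A (n : ℤ) (l : List ℕ) : V := P h c (l.length + 1) n l

lemma P_eq_A : ∀ k : ℕ, ∀ n : ℤ, ∀ l : List ℕ, Good l → l.length + 1 ≤ k →
    P h c k n l = A h c n l := by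
  intro k
  induction k with
  | zero => intro n l _ H; omega
  | succ k ih =>
    intro n l hg H
    rcases Nat.lt_or_ge k (l.length + 1) with hlt | hge
    · have : l.length + 1 = k + 1 := by omega
      rw [A, this]
    · rw [P_stab h c k n l hg hge]
      exact ih n l hg hge

lemma A_mem_supp {n : ℤ} {l : List ℕ} (hg : Good l) :
    ∀ s ∈ (A h c n l).support,
      Good s ∧ s.length ≤ l.length + 1 ∧ (s.length = l.length + 1 → HdZ s ≤ max n (HdZ l)) :=
  P_supp h c (l.length + 1) n l hg

/-- The operator `ℓ n` (kills non-good basis vectors). -/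
def Aop (n : ℤ) : V →ₗ[ℂ] V :=
  Finsupp.lsum ℂ (fun w => LinearMap.toSpanSingleton ℂ V (if Good w then A h c n w else 0))

/-- The central operator. -/
def Cop : V →ₗ[ℂ] V :=
  Finsupp.lsum ℂ (fun w => LinearMap.toSpanSingleton ℂ V (if Good w then c • δ w else 0))

lemma Aop_apply (n : ℤ) (x : V) :
    Aop h c n x = x.sum fun w a => a • (if Good w then A h c n w else 0) := by
  rw [Aop, Finsupp.lsum_apply]
  rfl

lemma Cop_apply (x : V) :
    Cop c x = x.sum fun w a => a • (if Good w then c • δ w else 0) := by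
  rw [Cop, Finsupp.lsum_apply]
  rfl

lemma Aop_δ {w : List ℕ} (n : ℤ) (hg : Good w) : Aop h c n (δ w) = A h c n w := by
  rw [Aop_apply, δ, Finsupp.sum_single_index (by simp), if_pos hg, one_smul]

lemma Aop_δ_bad {w : List ℕ} (n : ℤ) (hg : ¬Good w) : Aop h c n (δ w) = 0 := by
  rw [Aop_apply, δ, Finsupp.sum_single_index (by simp), if_neg hg, smul_zero]

lemma Cop_δ {w : List ℕ} (hg : Good w) : Cop c (δ w) = c • δ w := by
  rw [Cop_apply, δ, Finsupp.sum_single_index (by simp), if_pos hg, one_smul]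
  rfl

lemma Cop_δ_bad {w : List ℕ} (hg : ¬Good w) : Cop c (δ w) = 0 := by
  rw [Cop_apply, δ, Finsupp.sum_single_index (by simp), if_neg hg, smul_zero]

def GSub : Submodule ℂ V := Finsupp.supported ℂ ℂ {w | Good w}

lemma A_mem_GSub {n : ℤ} {l : List ℕ} (hg : Good l) : A h c n l ∈ GSub := by
  rw [GSub, Finsupp.mem_supported]
  intro s hs
  exact (A_mem_supp h c hg s hs).1

lemma Aop_mem_GSub (n : ℤ) (x : V) : Aop h c n x ∈ GSub := by
  rw [Aop_apply, Finsupp.sum]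
  apply Submodule.sum_mem
  intro w _
  by_cases hg : Good w
  · rw [if_pos hg]; exact Submodule.smul_mem _ _ (A_mem_GSub h c hg)
  · rw [if_neg hg]; simp

lemma Cop_good {x : V} (hx : x ∈ GSub) : Cop c x = c • x := by
  rw [Cop_apply]
  rw [GSub, Finsupp.mem_supported] at hx
  have : (x.sum fun w a => a • (if Good w then c • δ w else 0))
      = x.sum fun w a => c • (a • δ w) := by
    apply Finsupp.sum_congr
    intro w hw
    have hgw : Good w := hx hw
    rw [if_pos hgw, smul_comm]
  rw [this, ← Finsupp.smul_sum]
  congr 1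
  have : (x.sum fun w a => a • δ w) = x.sum Finsupp.single := by
    apply Finsupp.sum_congr
    intro w _
    rw [δ, Finsupp.smul_single, smul_eq_mul, mul_one]
  rw [this, Finsupp.sum_single]

lemma A_nil (n : ℤ) :
    A h c n [] = if n = 0 then h • δ [] else if 1 ≤ n then δ [n.toNat] else 0 := rfl

lemma Aop_shortcut {n : ℤ} {l : List ℕ} (hg : Good l) (h1 : 1 ≤ n) (h2 : HdZ l ≤ n) :
    Aop h c n (δ l) = δ (n.toNat :: l) := by
  rw [Aop_δ h c n hg, A]
  cases l with
  | nil => exact P_shortcut h c h1 h2 0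
  | cons j t => exact P_shortcut h c h1 h2 _

lemma Aop_commute {i : ℕ} {t : List ℕ} {n : ℤ} (hg : Good (i :: t)) (hni : n < (i : ℤ)) :
    Aop h c n (δ (i :: t)) =
      Aop h c (i : ℤ) (Aop h c n (δ t)) + ((i : ℂ) - (n : ℂ)) • Aop h c (n + (i : ℤ)) (δ t)
        + γ c n i • δ t := by
  have hgt := hg.tail
  have hi1 := hg.head_pos
  have hht := hg.hd_le
  have hi1' : (1 : ℤ) ≤ (i : ℤ) := by exact_mod_cast hi1
  have hsc : ¬(1 ≤ n ∧ (i : ℤ) ≤ n) := by push_neg; intro _; omega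
  rw [Aop_δ h c n hg, A, List.length_cons, P_cons, if_neg hsc]
  have e1 : P h c (t.length + 1) n t = A h c n t := rfl
  have e2 : P h c (t.length + 1) (n + (i : ℤ)) t = A h c (n + (i : ℤ)) t := rfl
  rw [e1, e2, Aop_δ h c n hgt, Aop_δ h c _ hgt]
  congr 1
  congr 1
  rw [Aop_apply]
  apply Finsupp.sum_congr
  intro s hs
  obtain ⟨G1, L1, H1⟩ := A_mem_supp h c hgt s hs
  rw [if_pos G1]
  congr 1
  by_cases hsl : s.length ≤ t.length
  · rw [P_eq_A h c (t.length + 1) (i : ℤ) s G1 (by omega)]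
  · have hfull : s.length = t.length + 1 := by omega
    have hH : HdZ s ≤ (i : ℤ) := le_trans (H1 hfull) (max_le (le_of_lt hni) hht)
    have ha : A h c (i : ℤ) s = δ ((i : ℤ).toNat :: s) := by
      rw [A]
      cases s with
      | nil => exact P_shortcut h c hi1' hH 0
      | cons j s' => exact P_shortcut h c hi1' hH _
    cases t with
    | nil =>
      rw [ha]
      cases s with
      | nil => simp at hfull
      | cons j s' => exact P_shortcut h c hi1' hH 0
    | cons u t' =>
      rw [ha]
      cases s with
      | nil => simp at hfull
      | cons j s' =>
        have : (u :: t').length + 1 = (u :: t').length + 1 := rfl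
        exact P_shortcut h c hi1' hH _

/-- Central 2-cocycle coefficient. -/
def cen (a b : ℤ) : ℂ := if a + b = 0 then ((b : ℂ) ^ 3 - (b : ℂ)) / 12 else 0

lemma γ_eq (a : ℤ) (i : ℕ) : γ c a i = cen a (i : ℤ) * c := by
  rw [γ, cen]
  by_cases hai : a + (i : ℤ) = 0
  · rw [if_pos hai, if_pos hai]
    push_cast
    ring
  · rw [if_neg hai, if_neg hai, zero_mul]

/-- The defect operator measuring failure of the Virasoro relation. -/
def D (m n : ℤ) : V →ₗ[ℂ] V :=
  Aop h c m ∘ₗ Aop h c n - Aop h c n ∘ₗ Aop h c m - (((n : ℂ) - (m : ℂ)) • Aop h c (m + n))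
    - cen m n • (c • (LinearMap.id : V →ₗ[ℂ] V))

lemma D_apply (m n : ℤ) (x : V) :
    D h c m n x = Aop h c m (Aop h c n x) - Aop h c n (Aop h c m x)
      - ((n : ℂ) - (m : ℂ)) • Aop h c (m + n) x - cen m n • (c • x) := by
  simp [D, LinearMap.sub_apply, LinearMap.smul_apply, LinearMap.comp_apply]

lemma D_zero_iff (m n : ℤ) (x : V) :
    D h c m n x = 0 ↔ Aop h c m (Aop h c n x) = Aop h c n (Aop h c m x)
      + ((n : ℂ) - (m : ℂ)) • Aop h c (m + n) x + cen m n • (c • x) := by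
  rw [D_apply, sub_sub, sub_sub, sub_eq_zero, ← add_assoc]

lemma D_of_support {m n : ℤ} {x : V} (H : ∀ w ∈ x.support, D h c m n (δ w) = 0) :
    D h c m n x = 0 := by
  conv_lhs => rw [← Finsupp.sum_single x]
  rw [map_finsuppSum]
  rw [Finsupp.sum]
  apply Finset.sum_eq_zero
  intro w hw
  have e : Finsupp.single w (x w) = (x w) • δ w := by
    rw [δ, Finsupp.smul_single, smul_eq_mul, mul_one]
  rw [e, map_smul, H w hw, smul_zero]

lemma D_diag (n : ℤ) (x : V) : D h c n n x = 0 := by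
  have hc0 : cen n n • (c • x) = 0 := by
    rw [cen]
    by_cases hn : n + n = 0
    · have : n = 0 := by omega
      subst this
      norm_num
    · rw [if_neg hn, zero_smul]
  simp [D_apply, hc0]

lemma D_flip (m n : ℤ) (x : V) : D h c m n x = - D h c n m x := by
  simp only [D_apply, cen]
  have e1 : n + m = m + n := by ring
  rw [e1]
  by_cases hmn : m + n = 0
  · rw [if_pos hmn, if_pos hmn]
    have hm : (m : ℂ) = -(n : ℂ) := by
      have hz : (m : ℤ) = -n := by omega
      exact_mod_cast hz
    rw [hm]
    module
  · rw [if_neg hmn, if_neg hmn]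
    module

/-- Case where the outer index dominates: direct proof. -/
lemma D_shortcut {l : List ℕ} {m n : ℤ} (hg : Good l) (hmn : m < n) (h1 : 1 ≤ n)
    (h2 : HdZ l ≤ n) : D h c m n (δ l) = 0 := by
  have htn : ((n.toNat : ℕ) : ℤ) = n := Int.toNat_of_nonneg (by omega)
  have hgn : Good (n.toNat :: l) := hg.cons (by omega) (by rw [htn]; exact h2)
  have e1 : Aop h c n (δ l) = δ (n.toNat :: l) := Aop_shortcut h c hg h1 h2
  have e2 := Aop_commute h c (i := n.toNat) (t := l) (n := m) hgn (by rw [htn]; exact hmn)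
  rw [htn] at e2
  have htc : ((n.toNat : ℕ) : ℂ) = (n : ℂ) := by exact_mod_cast congrArg (Int.cast : ℤ → ℂ) htn
  rw [htc] at e2
  rw [D_zero_iff, e1, e2, γ_eq, htn]
  module

lemma Aop_nil_neg {n : ℤ} (hn : n < 0) : Aop h c n (δ []) = 0 := by
  rw [Aop_δ h c n Good_nil, A_nil, if_neg (by omega), if_neg (by omega)]

lemma Aop_nil_zero : Aop h c 0 (δ []) = h • δ [] := by
  rw [Aop_δ h c 0 Good_nil, A_nil, if_pos rfl]

lemma D_nil (m n : ℤ) : D h c m n (δ []) = 0 := by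
  suffices H : ∀ m n : ℤ, m < n → D h c m n (δ []) = 0 by
    rcases lt_trichotomy m n with hmn | rfl | hmn
    · exact H m n hmn
    · exact D_diag h c m (δ [])
    · rw [D_flip, H n m hmn, neg_zero]
  intro m n hmn
  by_cases hn1 : 1 ≤ n
  · exact D_shortcut h c Good_nil hmn hn1 (by simp [HdZ]; omega)
  · push_neg at hn1
    rcases eq_or_lt_of_le (by omega : n ≤ 0) with hn0 | hnneg
    · subst hn0
      rw [D_apply, Aop_nil_zero, map_smul, Aop_nil_neg h c hmn, map_zero, add_zero,
        Aop_nil_neg h c hmn, smul_zero, cen, if_neg (by omega)]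
      simp
    · rw [D_apply, Aop_nil_neg h c hnneg, Aop_nil_neg h c (by omega : m < 0),
        Aop_nil_neg h c (by omega : m + n < 0), map_zero, map_zero, cen, if_neg (by omega)]
      simp

/-- The Virasoro relations hold on all good basis vectors. -/
lemma D_main : ∀ k : ℕ, ∀ l : List ℕ, l.length ≤ k → Good l → ∀ m n : ℤ,
    D h c m n (δ l) = 0 := by
  intro k
  induction k with
  | zero =>
    intro l hl hg m n
    have : l = [] := List.length_eq_zero_iff.mp (by omega)
    subst this
    exact D_nil h c m n
  | succ k IH =>
    intro l hl hg m n
    suffices H : ∀ m n : ℤ, m < n → D h c m n (δ l) = 0 by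
      rcases lt_trichotomy m n with hmn | rfl | hmn
      · exact H m n hmn
      · exact D_diag h c m (δ l)
      · rw [D_flip, H n m hmn, neg_zero]
    clear m n
    intro m n hmn
    cases l with
    | nil => exact D_nil h c m n
    | cons i t =>
      have hgt := hg.tail
      have hi1 := hg.head_pos
      have hht := hg.hd_le
      have hi1' : (1 : ℤ) ≤ (i : ℤ) := by exact_mod_cast hi1
      by_cases hin : (i : ℤ) ≤ n
      · exact D_shortcut h c hg hmn (le_trans hi1' hin) (by rw [HdZ_cons]; exact hin)
      · push_neg at hin
        -- now m < n < i
        have hlt : t.length ≤ k := by simp only [List.length_cons] at hl; omega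
        have comm_t : ∀ a b : ℤ, Aop h c a (Aop h c b (δ t)) = Aop h c b (Aop h c a (δ t))
            + ((b : ℂ) - (a : ℂ)) • Aop h c (a + b) (δ t) + cen a b • (c • δ t) :=
          fun a b => (D_zero_iff h c a b (δ t)).mp (IH t hlt hgt a b)
        have e0 : Aop h c (i : ℤ) (δ t) = δ (i :: t) := by
          have := Aop_shortcut h c hgt hi1' hht
          rwa [Int.toNat_natCast] at this
        have hsupp : ∀ b : ℤ, b ≤ (i : ℤ) →
            ∀ w ∈ (Aop h c b (δ t)).support, Good w ∧ (w.length ≤ t.length ∨ HdZ w ≤ (i : ℤ)) := by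
          intro b hb w hw
          rw [Aop_δ h c b hgt] at hw
          obtain ⟨G1, L1, H1⟩ := A_mem_supp h c hgt w hw
          refine ⟨G1, ?_⟩
          by_cases hwl : w.length ≤ t.length
          · exact Or.inl hwl
          · right
            have hfull : w.length = t.length + 1 := by omega
            exact le_trans (H1 hfull) (max_le hb hht)
        have commv : ∀ a : ℤ, a < (i : ℤ) → ∀ x : V,
            (∀ w ∈ x.support, Good w ∧ (w.length ≤ t.length ∨ HdZ w ≤ (i : ℤ))) →
            Aop h c a (Aop h c (i : ℤ) x) = Aop h c (i : ℤ) (Aop h c a x)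
              + (((i : ℤ) : ℂ) - (a : ℂ)) • Aop h c (a + (i : ℤ)) x
              + cen a (i : ℤ) • (c • x) := by
          intro a ha x hx
          refine (D_zero_iff h c a (i : ℤ) x).mp (D_of_support h c ?_)
          intro w hw
          obtain ⟨hgw, hcase⟩ := hx w hw
          rcases hcase with hlen | hhd
          · exact IH w (by omega) hgw a (i : ℤ)
          · exact D_shortcut h c hgw ha hi1' hhd
        have L3' : ∀ a : ℤ, Aop h c a (δ (i :: t)) = Aop h c (i : ℤ) (Aop h c a (δ t))
            + (((i : ℤ) : ℂ) - (a : ℂ)) • Aop h c (a + (i : ℤ)) (δ t)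
            + cen a (i : ℤ) • (c • δ t) := by
          intro a
          rcases lt_or_ge a (i : ℤ) with halt | hage
          · rw [Aop_commute h c hg halt, γ_eq, mul_smul]
            push_cast
            rfl
          · rcases eq_or_lt_of_le hage with heq | hlt'
            · subst heq
              rw [← e0, sub_self, zero_smul, add_zero, cen, if_neg (by omega), zero_smul,
                add_zero]
            · have hds := D_shortcut h c hgt hlt' (le_trans hi1' (le_of_lt hlt'))
                (le_trans hht (le_of_lt hlt'))
              have key := (D_zero_iff h c (i : ℤ) a (δ t)).mp hds
              have e2 : (i : ℤ) + a = a + (i : ℤ) := by ring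
              rw [e2] at key
              have hc1 : cen (i : ℤ) a = 0 := by rw [cen, if_neg (by omega)]
              have hc2 : cen a (i : ℤ) = 0 := by rw [cen, if_neg (by omega)]
              rw [hc1, zero_smul, add_zero] at key
              rw [hc2, zero_smul, add_zero, ← e0]
              linear_combination (norm := module) -key
        -- main computation
        rw [D_apply, L3' n, L3' m, L3' (m + n)]
        simp only [map_add, map_smul]
        rw [commv m (by omega) _ (hsupp n (by omega)), commv n (by omega) _ (hsupp m (by omega))]
        rw [comm_t m n]
        simp only [map_add, map_smul]
        rw [comm_t (m + (i : ℤ)) n, comm_t m (n + (i : ℤ))]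
        rw [show m + (i : ℤ) + n = m + n + (i : ℤ) from by ring,
          show m + (n + (i : ℤ)) = m + n + (i : ℤ) from by ring]
        rw [← e0]
        by_cases hcase : m + n + (i : ℤ) = 0
        · obtain rfl : m = -n - (i : ℤ) := by omega
          have hceq1 : cen (-n - (i : ℤ) + (i : ℤ)) n = ((n : ℂ) ^ 3 - (n : ℂ)) / 12 := by
            rw [cen, if_pos (by omega)]
          have hceq2 : cen (-n - (i : ℤ)) (n + (i : ℤ)) =
              (((n : ℂ) + ((i : ℤ) : ℂ)) ^ 3 - ((n : ℂ) + ((i : ℤ) : ℂ))) / 12 := by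
            rw [cen, if_pos (by omega)]
            push_cast
            ring
          have hceq3 : cen (-n - (i : ℤ) + n) (i : ℤ) = (((i : ℤ) : ℂ) ^ 3 - ((i : ℤ) : ℂ)) / 12 := by
            rw [cen, if_pos (by omega)]
          rw [hceq1, hceq2, hceq3]
          push_cast
          match_scalars <;> ring
        · have hceq1 : cen (m + (i : ℤ)) n = 0 := by rw [cen, if_neg (by omega)]
          have hceq2 : cen m (n + (i : ℤ)) = 0 := by rw [cen, if_neg (by omega)]
          have hceq3 : cen (m + n) (i : ℤ) = 0 := by rw [cen, if_neg (by omega)]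
          rw [hceq1, hceq2, hceq3]
          match_scalars <;> ring

/-- The concrete Virasoro representation on `V`. -/
def concreteRep (h c : ℂ) : VirasoroRep V where
  L n := Aop h c n
  C := Cop c
  comm_LL m n := by
    apply Finsupp.lhom_ext
    intro w b
    have hb : (Finsupp.single w b : V) = b • δ w := by
      rw [δ, Finsupp.smul_single, smul_eq_mul, mul_one]
    rw [hb, map_smul, map_smul]
    congr 1
    simp only [LinearMap.sub_apply, LinearMap.add_apply, LinearMap.smul_apply,
      Module.End.mul_apply]
    by_cases hgw : Good w
    · have key := (D_zero_iff h c m n (δ w)).mp (D_main h c w.length w le_rfl hgw m n)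
      rw [key, Cop_δ c hgw]
      rw [show (if m + n = 0 then ((n : ℂ) ^ 3 - (n : ℂ)) / 12 else 0) = cen m n from rfl]
      module
    · rw [Aop_δ_bad h c n hgw, Aop_δ_bad h c m hgw, Aop_δ_bad h c (m + n) hgw,
        Cop_δ_bad c hgw, map_zero, map_zero]
      simp
  comm_CL n := by
    apply Finsupp.lhom_ext
    intro w b
    have hb : (Finsupp.single w b : V) = b • δ w := by
      rw [δ, Finsupp.smul_single, smul_eq_mul, mul_one]
    rw [hb, map_smul, map_smul]
    congr 1
    simp only [LinearMap.sub_apply, Module.End.mul_apply, LinearMap.zero_apply]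
    by_cases hgw : Good w
    · rw [Cop_good c (Aop_mem_GSub h c n (δ w)), Cop_δ c hgw, map_smul, sub_self]
    · rw [Aop_δ_bad h c n hgw, Cop_δ_bad c hgw, map_zero, map_zero, sub_self]

/-- The concrete Virasoro module. -/
def concreteModule (h c : ℂ) : VirasoroModule :=
  { carrier := V, rep := concreteRep h c }

lemma concrete_singular (h c : ℂ) : (concreteRep h c).IsSingular h c (δ []) := by
  refine ⟨fun n hn => ?_, ?_, ?_⟩
  · exact Aop_nil_neg h c (by omega)
  · exact Aop_nil_zero h c
  · exact Cop_δ c Good_nil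

section Mside

variable {M : Type} [AddCommGroup M] [Module ℂ M] (ρ : VirasoroRep M)

def GoodZ (l : List ℤ) : Prop := l.IsChain (· ≥ ·) ∧ ∀ i ∈ l, 1 ≤ i

lemma GoodZ_nil : GoodZ [] := ⟨List.isChain_nil, by simp⟩

lemma GoodZ.tail {i : ℤ} {t : List ℤ} (hg : GoodZ (i :: t)) : GoodZ t :=
  ⟨hg.1.tail, fun j hj => hg.2 j (List.mem_cons_of_mem _ hj)⟩

lemma GoodZ.head_pos {i : ℤ} {t : List ℤ} (hg : GoodZ (i :: t)) : 1 ≤ i :=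
  hg.2 i (List.mem_cons_self)

lemma GoodZ.hd_le {i : ℤ} {t : List ℤ} (hg : GoodZ (i :: t)) : t.headI ≤ i := by
  cases t with
  | nil => simp [List.headI]; exact le_trans zero_le_one hg.head_pos
  | cons j t' => exact (List.isChain_cons_cons.mp hg.1).1

lemma GoodZ.cons {i : ℤ} {t : List ℤ} (hg : GoodZ t) (h1 : 1 ≤ i) (h2 : t.headI ≤ i) :
    GoodZ (i :: t) := by
  refine ⟨?_, ?_⟩
  · cases t with
    | nil => simp
    | cons j t' => exact List.isChain_cons_cons.mpr ⟨h2, hg.1⟩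
  · intro j hj
    rcases List.mem_cons.mp hj with rfl | hj
    · exact h1
    · exact hg.2 j hj

variable (v : M)

def monoZ (l : List ℤ) : M := l.foldr (fun i x => ρ.L i x) v

@[simp] lemma monoZ_nil : monoZ ρ v [] = v := rfl

@[simp] lemma monoZ_cons (i : ℤ) (t : List ℤ) :
    monoZ ρ v (i :: t) = ρ.L i (monoZ ρ v t) := rfl

lemma rep_comm (m n : ℤ) (x : M) : ρ.L m (ρ.L n x) = ρ.L n (ρ.L m x)
    + ((n : ℂ) - (m : ℂ)) • ρ.L (m + n) x
    + (if m + n = 0 then ((n : ℂ) ^ 3 - (n : ℂ)) / 12 else 0) • ρ.C x := by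
  have := congrArg (fun f : Module.End ℂ M => f x) (ρ.comm_LL m n)
  simp only [LinearMap.sub_apply, LinearMap.add_apply, LinearMap.smul_apply,
    Module.End.mul_apply] at this
  linear_combination (norm := module) this

lemma rep_commC (n : ℤ) (x : M) : ρ.C (ρ.L n x) = ρ.L n (ρ.C x) := by
  have := congrArg (fun f : Module.End ℂ M => f x) (ρ.comm_CL n)
  simp only [LinearMap.sub_apply, Module.End.mul_apply, LinearMap.zero_apply] at this
  linear_combination (norm := module) this

variable (h c : ℂ)

lemma C_mono (hsing : ρ.IsSingular h c v) :
    ∀ l : List ℤ, ρ.C (monoZ ρ v l) = c • monoZ ρ v l := by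
  intro l
  induction l with
  | nil => exact hsing.2.2
  | cons i t ih => rw [monoZ_cons, rep_commC, ih, map_smul]

lemma L_nil_neg (hsing : ρ.IsSingular h c v) {n : ℤ} (hn : n ≤ -1) : ρ.L n v = 0 := by
  have := hsing.1 (-n) (by omega)
  rwa [neg_neg] at this

/-- Span of good monomials of bounded length/head. -/
def TsubM (k : ℕ) (b : ℤ) : Submodule ℂ M := Submodule.span ℂ
  {x | ∃ l : List ℤ, GoodZ l ∧ l.length ≤ k ∧ (l.length = k → l.headI ≤ b) ∧ monoZ ρ v l = x}

lemma TsubM_mono {k k' : ℕ} (b b' : ℤ) (hk : k < k') : TsubM ρ v k b ≤ TsubM ρ v k' b' := by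
  apply Submodule.span_mono
  rintro x ⟨l, hg, hl, _, rfl⟩
  exact ⟨l, hg, by omega, fun hc => by omega, rfl⟩

lemma str_nil (hsing : ρ.IsSingular h c v) (n : ℤ) (k : ℕ) (b : ℤ) (hn : n ≤ b) (hk : 1 ≤ k) :
    ρ.L n v ∈ TsubM ρ v k b := by
  rcases lt_trichotomy n 0 with hneg | rfl | hpos
  · rw [L_nil_neg ρ v h c hsing (by omega)]
    exact zero_mem _
  · rw [hsing.2.1]
    refine Submodule.smul_mem _ _ (Submodule.subset_span ⟨[], GoodZ_nil, by simp, ?_, rfl⟩)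
    intro hc
    simp at hc
    omega
  · refine Submodule.subset_span ⟨[n], ⟨by simp, by simpa using by omega⟩, by simpa using hk, ?_, rfl⟩
    intro _
    simpa using hn

lemma strM (hsing : ρ.IsSingular h c v) :
    ∀ K : ℕ, ∀ l : List ℤ, l.length ≤ K → GoodZ l → ∀ n : ℤ,
      ρ.L n (monoZ ρ v l) ∈ TsubM ρ v (l.length + 1) (max n l.headI) := by
  intro K
  induction K with
  | zero =>
    intro l hl _ n
    have : l = [] := List.length_eq_zero_iff.mp (by omega)
    subst this
    exact str_nil ρ v h c hsing n 1 _ (le_max_left _ _) le_rfl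
  | succ K IH =>
    intro l hl hg n
    cases l with
    | nil => exact str_nil ρ v h c hsing n 1 _ (le_max_left _ _) le_rfl
    | cons i t =>
      have hgt := hg.tail
      have hi1 := hg.head_pos
      have hht := hg.hd_le
      have hlt : t.length ≤ K := by simp only [List.length_cons] at hl; omega
      by_cases hin : i ≤ n
      · refine Submodule.subset_span ⟨n :: i :: t, hg.cons (by omega) (by simpa using hin), by simp, ?_, rfl⟩
        intro _
        simp only [List.headI_cons]
        exact le_max_left _ _
      · push_neg at hin
        rw [monoZ_cons, rep_comm ρ n i (monoZ ρ v t)]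
        refine add_mem (add_mem ?_ ?_) ?_
        · -- L i (L n (monoZ t))
          have h1 := IH t hlt hgt n
          have h2 : ρ.L i (ρ.L n (monoZ ρ v t)) ∈
              Submodule.map (ρ.L i) (TsubM ρ v (t.length + 1) (max n t.headI)) :=
            Submodule.mem_map_of_mem h1
          refine (?_ : Submodule.map (ρ.L i) (TsubM ρ v (t.length + 1) (max n t.headI)) ≤ _) h2
          rw [TsubM, Submodule.map_span]
          apply Submodule.span_le.mpr
          rintro _ ⟨x, ⟨s, hgs, hlen, hhead, rfl⟩, rfl⟩
          by_cases hfull : s.length = t.length + 1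
          · have hhs : s.headI ≤ i :=
              le_trans (hhead hfull) (max_le (le_of_lt hin) hht)
            refine Submodule.subset_span ⟨i :: s, hgs.cons (by omega) hhs, by simp only [List.length_cons]; omega, ?_, rfl⟩
            intro _
            simp only [List.headI_cons]
            exact le_max_right _ _
          · have h3 := IH s (by omega) hgs i
            exact TsubM_mono ρ v _ _ (by simp only [List.length_cons]; omega) h3
        · exact Submodule.smul_mem _ _
            (TsubM_mono ρ v _ _ (by simp only [List.length_cons]; omega) (IH t hlt hgt (n + i)))
        · refine Submodule.smul_mem _ _ ?_
          rw [C_mono ρ v h c hsing]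
          refine Submodule.smul_mem _ _ (Submodule.subset_span ⟨t, hgt, by simp only [List.length_cons]; omega, ?_, rfl⟩)
          intro hc
          simp only [List.length_cons] at hc
          omega

/-- The span of all good monomials. -/
def SpanGood : Submodule ℂ M := Submodule.span ℂ {x | ∃ l : List ℤ, GoodZ l ∧ monoZ ρ v l = x}

lemma TsubM_le_SpanGood (k : ℕ) (b : ℤ) : TsubM ρ v k b ≤ SpanGood ρ v := by
  apply Submodule.span_mono
  rintro x ⟨l, hg, _, _, rfl⟩
  exact ⟨l, hg, rfl⟩

lemma SpanGood_eq_top (hsing : ρ.IsSingular h c v) (hgen : ρ.Generates v) :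
    SpanGood ρ v = ⊤ := by
  apply hgen
  · constructor
    · intro n x hx
      have h2 : ρ.L n x ∈ Submodule.map (ρ.L n) (SpanGood ρ v) := Submodule.mem_map_of_mem hx
      refine (?_ : Submodule.map (ρ.L n) (SpanGood ρ v) ≤ SpanGood ρ v) h2
      rw [SpanGood, Submodule.map_span]
      apply Submodule.span_le.mpr
      rintro _ ⟨x, ⟨l, hg, rfl⟩, rfl⟩
      exact TsubM_le_SpanGood ρ v _ _ (strM ρ v h c hsing l.length l le_rfl hg n)
    · intro x hx
      have h2 : ρ.C x ∈ Submodule.map ρ.C (SpanGood ρ v) := Submodule.mem_map_of_mem hx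
      refine (?_ : Submodule.map ρ.C (SpanGood ρ v) ≤ SpanGood ρ v) h2
      rw [SpanGood, Submodule.map_span]
      apply Submodule.span_le.mpr
      rintro _ ⟨x, ⟨l, hg, rfl⟩, rfl⟩
      rw [C_mono ρ v h c hsing]
      exact Submodule.smul_mem _ _ (Submodule.subset_span ⟨l, hg, rfl⟩)
  · exact Submodule.subset_span ⟨[], GoodZ_nil, rfl⟩

lemma L0_mono (hsing : ρ.IsSingular h c v) :
    ∀ l : List ℤ, (∀ i ∈ l, 1 ≤ i) →
      ρ.L 0 (monoZ ρ v l) = (h + (l.sum : ℂ)) • monoZ ρ v l := by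
  intro l
  induction l with
  | nil => intro _; simpa using hsing.2.1
  | cons i t ih =>
    intro hpos
    have hi1 : 1 ≤ i := hpos i (List.mem_cons_self)
    have ht := ih (fun j hj => hpos j (List.mem_cons_of_mem _ hj))
    rw [monoZ_cons, rep_comm ρ 0 i (monoZ ρ v t), ht, zero_add, if_neg (by omega), map_smul]
    have hsum : ((List.sum (i :: t) : ℤ) : ℂ) = (i : ℂ) + ((t.sum : ℤ) : ℂ) := by
      rw [List.sum_cons]
      push_cast
      ring
    rw [hsum]
    match_scalars <;> ring

end Mside

section Bridge

def natify (l : List ℤ) : List ℕ := l.map Int.toNat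

@[simp] lemma natify_nil : natify [] = [] := rfl

@[simp] lemma natify_cons (i : ℤ) (t : List ℤ) : natify (i :: t) = i.toNat :: natify t := rfl

lemma denat : ∀ {l : List ℤ}, (∀ i ∈ l, 1 ≤ i) → (natify l).map (Nat.cast : ℕ → ℤ) = l := by
  intro l
  induction l with
  | nil => intro _; rfl
  | cons i t ih =>
    intro hp
    have h1 : 1 ≤ i := hp i (List.mem_cons_self)
    have : ((i.toNat : ℕ) : ℤ) = i := Int.toNat_of_nonneg (by omega)
    simp only [natify_cons, List.map_cons, this, ih (fun j hj => hp j (List.mem_cons_of_mem _ hj))]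

lemma natify_inj {l₁ l₂ : List ℤ} (h1 : ∀ i ∈ l₁, 1 ≤ i) (h2 : ∀ i ∈ l₂, 1 ≤ i)
    (he : natify l₁ = natify l₂) : l₁ = l₂ := by
  rw [← denat h1, ← denat h2, he]

lemma natify_good {l : List ℤ} (hg : GoodZ l) : Good (natify l) := by
  constructor
  · rw [natify, List.isChain_map]
    exact hg.1.imp (fun a b hab => Int.toNat_le_toNat hab)
  · intro j hj
    rcases List.mem_map.mp hj with ⟨i, hi, rfl⟩
    have := hg.2 i hi
    omega

lemma natify_hd {i : ℤ} {t : List ℤ} (hg : GoodZ (i :: t)) : HdZ (natify t) ≤ i := by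
  cases t with
  | nil => simpa [HdZ] using le_trans zero_le_one hg.head_pos
  | cons j t' =>
    have hj1 : 1 ≤ j := hg.tail.head_pos
    have : j ≤ i := hg.hd_le
    simp only [natify_cons, HdZ, List.headI_cons]
    omega

lemma natify_sum : ∀ {l : List ℤ}, (∀ i ∈ l, 1 ≤ i) → ((natify l).sum : ℤ) = l.sum := by
  intro l
  induction l with
  | nil => intro _; rfl
  | cons i t ih =>
    intro hp
    have h1 : 1 ≤ i := hp i (List.mem_cons_self)
    have ht := ih (fun j hj => hp j (List.mem_cons_of_mem _ hj))
    simp only [natify_cons, List.sum_cons]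
    rw [Nat.cast_add, ht, Int.toNat_of_nonneg (by omega)]

end Bridge

end

end VermaAux

namespace VermaAux

/-- Sorted positive lists summing to `n` are equivalent to partitions of `n`. -/
def partEquiv (n : ℕ) :
    {l : {l : List ℤ // l.Pairwise (· ≥ ·) ∧ ∀ i ∈ l, 1 ≤ i} // l.val.sum = (n : ℤ)} ≃
      Nat.Partition n where
  toFun p :=
    { parts := (natify p.val.val : Multiset ℕ)
      parts_pos := by
        intro i hi
        rcases List.mem_map.mp (Multiset.mem_coe.mp hi) with ⟨j, hj, rfl⟩
        have := p.val.2.2 j hj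
        omega
      parts_sum := by
        rw [Multiset.sum_coe]
        have h1 : ((natify p.val.val).sum : ℤ) = p.val.val.sum := natify_sum p.val.2.2
        rw [p.2] at h1
        exact_mod_cast h1 }
  invFun q := ⟨⟨(Multiset.sort q.parts (· ≥ ·)).map (Nat.cast : ℕ → ℤ),
    by
      refine List.Pairwise.map _ ?_ (Multiset.pairwise_sort q.parts (· ≥ ·))
      intro a b hab
      exact_mod_cast hab,
    by
      intro i hi
      rcases List.mem_map.mp hi with ⟨k, hk, rfl⟩
      have := q.parts_pos ((Multiset.mem_sort ..).mp hk)
      exact_mod_cast this⟩,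
    by
      have h1 : ((Multiset.sort q.parts (· ≥ ·)).sum : ℤ)
          = ((q.parts.sum : ℕ) : ℤ) := by
        congr 1
        have := congrArg Multiset.sum (Multiset.sort_eq q.parts (· ≥ ·))
        rwa [Multiset.sum_coe] at this
      have h2 : ((Multiset.sort q.parts (· ≥ ·)).map (Nat.cast : ℕ → ℤ)).sum
          = ((Multiset.sort q.parts (· ≥ ·)).sum : ℤ) := (Nat.cast_list_sum _).symm
      rw [h2, h1, q.parts_sum]⟩
  left_inv p := by
    apply Subtype.ext
    apply Subtype.ext
    show (Multiset.sort ((natify p.val.val : Multiset ℕ)) (· ≥ ·)).map (Nat.cast : ℕ → ℤ)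
      = p.val.val
    have hsorted : List.Pairwise (· ≥ ·) (natify p.val.val) := by
      have hg : GoodZ p.val.val := ⟨List.isChain_iff_pairwise.mpr p.val.2.1, p.val.2.2⟩
      exact List.isChain_iff_pairwise.mp (natify_good hg).1
    have h1 : Multiset.sort ((natify p.val.val : Multiset ℕ)) (· ≥ ·) = natify p.val.val :=
      List.Perm.eq_of_pairwise'
        (Multiset.pairwise_sort _ (· ≥ ·)) hsorted
        (Multiset.coe_eq_coe.mp (Multiset.sort_eq _ (· ≥ ·)))
    rw [h1]
    exact denat p.val.2.2
  right_inv q := by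
    apply Nat.Partition.ext
    show (natify ((Multiset.sort q.parts (· ≥ ·)).map (Nat.cast : ℕ → ℤ)) : Multiset ℕ)
      = q.parts
    have h1 : natify ((Multiset.sort q.parts (· ≥ ·)).map (Nat.cast : ℕ → ℤ))
        = Multiset.sort q.parts (· ≥ ·) := by
      rw [natify, List.map_map]
      have : (Int.toNat ∘ (Nat.cast : ℕ → ℤ)) = id := by
        funext k
        simp [Function.comp]
      rw [this, List.map_id]
    rw [h1]
    exact Multiset.sort_eq q.parts (· ≥ ·)

end VermaAux

/-- In the Verma module `V(h,c)` with distinguished singular vector `v`, the vectors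
`L i₁ · L i₂ · … · L iₖ · v` with `i₁ ≥ i₂ ≥ … ≥ iₖ ≥ 1` form a basis (they are linearly
independent and span); consequently for every `n : ℕ` the eigenspace of `L 0` with eigenvalue
`h + n` has dimension `p(n)`, the number of partitions of `n`. -/
theorem verma_module_pbw_basis (h c : ℂ) (M : VirasoroModule) (v : M.carrier)
    (hV : IsVermaModule h c M v) :
    (LinearIndependent ℂ
        (fun l : {l : List ℤ // l.Pairwise (· ≥ ·) ∧ ∀ i ∈ l, 1 ≤ i} =>
          (l : List ℤ).foldr (fun i x => M.rep.L i x) v) ∧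
      Submodule.span ℂ
        (Set.range (fun l : {l : List ℤ // l.Pairwise (· ≥ ·) ∧ ∀ i ∈ l, 1 ≤ i} =>
          (l : List ℤ).foldr (fun i x => M.rep.L i x) v)) = ⊤) ∧
    ∀ n : ℕ, Module.finrank ℂ (Module.End.eigenspace (M.rep.L 0) (h + (n : ℂ)))
      = Fintype.card (Nat.Partition n) := by
  classical
  obtain ⟨hsing, hgen, huniv⟩ := hV
  set ρ := M.rep with hρ
  have trans_ge : Transitive (α := ℤ) (· ≥ ·) := fun a b cc hab hbc => le_trans hbc hab
  have hgoodZ : ∀ l : {l : List ℤ // l.Pairwise (· ≥ ·) ∧ ∀ i ∈ l, 1 ≤ i},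
      VermaAux.GoodZ l.val := fun l => ⟨List.isChain_iff_pairwise.mpr l.2.1, l.2.2⟩
  have hfam : ∀ l : {l : List ℤ // l.Pairwise (· ≥ ·) ∧ ∀ i ∈ l, 1 ≤ i},
      (l : List ℤ).foldr (fun i x => M.rep.L i x) v = VermaAux.monoZ ρ v l.val := fun _ => rfl
  -- the homomorphism to the concrete module
  obtain ⟨f, ⟨hfhom, hfv⟩, -⟩ := huniv (VermaAux.concreteModule h c) (VermaAux.δ [])
    (VermaAux.concrete_singular h c)
  have himg : ∀ l : List ℤ, VermaAux.GoodZ l →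
      f (VermaAux.monoZ ρ v l) = VermaAux.δ (VermaAux.natify l) := by
    intro l hg
    induction l with
    | nil => simpa using hfv
    | cons i t ih =>
      rw [VermaAux.monoZ_cons, hρ] at *
      rw [hfhom.1 i _, ih hg.tail]
      show VermaAux.Aop h c i (VermaAux.δ (VermaAux.natify t)) = _
      rw [VermaAux.Aop_shortcut h c (VermaAux.natify_good hg.tail) hg.head_pos
        (VermaAux.natify_hd hg)]
      rfl
  -- linear independence
  have hinj : Function.Injective
      (fun l : {l : List ℤ // l.Pairwise (· ≥ ·) ∧ ∀ i ∈ l, 1 ≤ i} =>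
        VermaAux.natify l.val) := by
    intro l₁ l₂ he
    exact Subtype.ext (VermaAux.natify_inj l₁.2.2 l₂.2.2 he)
  have hind_img : LinearIndependent ℂ
      (fun l : {l : List ℤ // l.Pairwise (· ≥ ·) ∧ ∀ i ∈ l, 1 ≤ i} =>
        VermaAux.δ (VermaAux.natify l.val)) := by
    have hb := (Finsupp.basisSingleOne (R := ℂ) (ι := List ℕ)).linearIndependent
    have he : (fun l : {l : List ℤ // l.Pairwise (· ≥ ·) ∧ ∀ i ∈ l, 1 ≤ i} =>
        VermaAux.δ (VermaAux.natify l.val))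
        = ⇑(Finsupp.basisSingleOne (R := ℂ) (ι := List ℕ)) ∘
          (fun l : {l : List ℤ // l.Pairwise (· ≥ ·) ∧ ∀ i ∈ l, 1 ≤ i} =>
            VermaAux.natify l.val) := by
      funext l
      simp [VermaAux.δ, Function.comp]
    rw [he]
    exact hb.comp _ hinj
  have hLI : LinearIndependent ℂ
      (fun l : {l : List ℤ // l.Pairwise (· ≥ ·) ∧ ∀ i ∈ l, 1 ≤ i} =>
        (l : List ℤ).foldr (fun i x => M.rep.L i x) v) := by
    apply LinearIndependent.of_comp f
    have he : (⇑f ∘ fun l : {l : List ℤ // l.Pairwise (· ≥ ·) ∧ ∀ i ∈ l, 1 ≤ i} =>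
        (l : List ℤ).foldr (fun i x => M.rep.L i x) v)
        = fun l : {l : List ℤ // l.Pairwise (· ≥ ·) ∧ ∀ i ∈ l, 1 ≤ i} =>
          VermaAux.δ (VermaAux.natify l.val) := by
      funext l
      simp only [Function.comp_apply]
      rw [hfam l, himg l.val (hgoodZ l)]
    rw [he]
    exact hind_img
  -- spanning
  have hsetvx : Set.range (fun l : {l : List ℤ // l.Pairwise (· ≥ ·) ∧ ∀ i ∈ l, 1 ≤ i} =>
      (l : List ℤ).foldr (fun i x => M.rep.L i x) v)
      = {x | ∃ l : List ℤ, VermaAux.GoodZ l ∧ VermaAux.monoZ ρ v l = x} := by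
    ext x
    constructor
    · rintro ⟨l, rfl⟩
      exact ⟨l.val, hgoodZ l, rfl⟩
    · rintro ⟨l, hg, rfl⟩
      exact ⟨⟨l, List.isChain_iff_pairwise.mp hg.1, hg.2⟩, rfl⟩
  have hspan : Submodule.span ℂ (Set.range
      (fun l : {l : List ℤ // l.Pairwise (· ≥ ·) ∧ ∀ i ∈ l, 1 ≤ i} =>
        (l : List ℤ).foldr (fun i x => M.rep.L i x) v)) = ⊤ := by
    rw [hsetvx]
    exact VermaAux.SpanGood_eq_top ρ v h c hsing hgen
  refine ⟨⟨hLI, hspan⟩, ?_⟩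
  intro n
  let B : Module.Basis {l : List ℤ // l.Pairwise (· ≥ ·) ∧ ∀ i ∈ l, 1 ≤ i} ℂ M.carrier :=
    Module.Basis.mk hLI hspan.ge
  have hBapply : ∀ l : {l : List ℤ // l.Pairwise (· ≥ ·) ∧ ∀ i ∈ l, 1 ≤ i},
      B l = VermaAux.monoZ ρ v l.val := by
    intro l
    rw [Module.Basis.mk_apply]
    exact hfam l
  have hL0B : ∀ l : {l : List ℤ // l.Pairwise (· ≥ ·) ∧ ∀ i ∈ l, 1 ≤ i},
      M.rep.L 0 (B l) = (h + ((l.val.sum : ℤ) : ℂ)) • B l := by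
    intro l
    rw [hBapply]
    exact VermaAux.L0_mono ρ v h c hsing l.val l.2.2
  have hrepr : ∀ (x : M.carrier) (l : {l : List ℤ // l.Pairwise (· ≥ ·) ∧ ∀ i ∈ l, 1 ≤ i}),
      B.repr (M.rep.L 0 x) l = (h + ((l.val.sum : ℤ) : ℂ)) * B.repr x l := by
    intro x l
    have hmaps : (Finsupp.lapply l ∘ₗ (B.repr.toLinearMap) ∘ₗ (M.rep.L 0))
        = ((h + ((l.val.sum : ℤ) : ℂ)) • (Finsupp.lapply l ∘ₗ B.repr.toLinearMap)) := by
      apply B.ext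
      intro l'
      simp only [LinearMap.comp_apply, LinearMap.smul_apply, LinearEquiv.coe_coe]
      rw [hL0B l', map_smul, B.repr_self]
      simp only [Finsupp.lapply_apply, Finsupp.smul_apply, smul_eq_mul]
      rcases eq_or_ne l' l with rfl | hne
      · simp
      · simp [Finsupp.single_eq_of_ne hne.symm]
    have := congrArg (fun φ => φ x) hmaps
    simpa using this
  have hEig : Module.End.eigenspace (M.rep.L 0) (h + (n : ℂ))
      = Submodule.span ℂ (Set.range
          (fun p : {l : {l : List ℤ // l.Pairwise (· ≥ ·) ∧ ∀ i ∈ l, 1 ≤ i} //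
            l.val.sum = (n : ℤ)} => B p.val)) := by
    apply le_antisymm
    · intro x hx
      have hx' : M.rep.L 0 x = (h + (n : ℂ)) • x := Module.End.mem_eigenspace_iff.mp hx
      have hcoord : ∀ l : {l : List ℤ // l.Pairwise (· ≥ ·) ∧ ∀ i ∈ l, 1 ≤ i},
          l.val.sum ≠ (n : ℤ) → B.repr x l = 0 := by
        intro l hne
        have h1 := hrepr x l
        rw [hx', map_smul, Finsupp.smul_apply, smul_eq_mul] at h1
        have hzz : ((h + ((l.val.sum : ℤ) : ℂ)) - (h + (n : ℂ))) * B.repr x l = 0 := by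
          linear_combination -h1
        rcases mul_eq_zero.mp hzz with h4 | h4
        · exfalso
          apply hne
          have h5 : ((l.val.sum : ℤ) : ℂ) = ((n : ℤ) : ℂ) := by
            push_cast at h4 ⊢
            linear_combination h4
          exact_mod_cast h5
        · exact h4
      rw [← B.linearCombination_repr x, Finsupp.linearCombination_apply, Finsupp.sum]
      apply Submodule.sum_mem
      intro l hl
      have hsum : l.val.sum = (n : ℤ) := by
        by_contra hne
        exact (Finsupp.mem_support_iff.mp hl) (hcoord l hne)
      exact Submodule.smul_mem _ _ (Submodule.subset_span ⟨⟨l, hsum⟩, rfl⟩)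
    · apply Submodule.span_le.mpr
      rintro _ ⟨p, rfl⟩
      rw [SetLike.mem_coe, Module.End.mem_eigenspace_iff, hL0B p.val, p.2]
      norm_cast
  haveI : Fintype {l : {l : List ℤ // l.Pairwise (· ≥ ·) ∧ ∀ i ∈ l, 1 ≤ i} //
      l.val.sum = (n : ℤ)} := Fintype.ofEquiv _ (VermaAux.partEquiv n).symm
  have hind2 : LinearIndependent ℂ
      (fun p : {l : {l : List ℤ // l.Pairwise (· ≥ ·) ∧ ∀ i ∈ l, 1 ≤ i} //
        l.val.sum = (n : ℤ)} => B p.val) :=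
    B.linearIndependent.comp Subtype.val Subtype.val_injective
  rw [hEig, finrank_span_eq_card hind2]
  exact Fintype.card_congr (VermaAux.partEquiv n)
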